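/- Let φ be a continuous flow on a locally compact metric space M and let K be an isolated attractor with only internal explosions (i.e., J⁺(x) ⊆ K for every x in the basin of attraction A(K) with x ∉ K). Then J⁻(x) ⊆ K for every x in the stabilization K̂ with x ∉ K. -/

import Mathlib

open Set

variable {M : Type} [TopologicalSpace M]

/-- The image set `A · S = {φ(x,t) : x ∈ A, t ∈ S}` of a set of points and a set of
times under a flow. -/
def flowImage (φ : Flow ℝ M) (A : Set M) (S : Set ℝ) : Set M :=
  {y | ∃ x ∈ A, ∃ t ∈ S, φ t x = y}

/-- `U` is an open neighbourhood of `x` in `A`, i.e. a relatively open subset of `A`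
containing `x`. -/
def IsRelOpenNbhd (A : Set M) (x : M) (U : Set M) : Prop :=
  x ∈ U ∧ ∃ V : Set M, IsOpen V ∧ U = V ∩ A

/-- The positive prolongational limit set of `x` relative to `A`:
`J⁺(x, A) = ⋂_{U, t ≥ 0} closure (U · [t, ∞))`, `U` ranging over the open
neighbourhoods of `x` in `A`. -/
def jPlusRel (φ : Flow ℝ M) (A : Set M) (x : M) : Set M :=
  ⋂ (U : Set M) (_ : IsRelOpenNbhd A x U) (t : ℝ) (_ : 0 ≤ t),
    closure (flowImage φ U (Ici t))

/-- The positive prolongational limit set `J⁺(x) = J⁺(x, M)`. -/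
def jPlus (φ : Flow ℝ M) (x : M) : Set M := jPlusRel φ univ x

/-- The negative prolongational limit set of `x` relative to `A`:
`J⁻(x, A) = ⋂_{U, t ≥ 0} closure (U · (-∞, -t])`. -/
def jMinusRel (φ : Flow ℝ M) (A : Set M) (x : M) : Set M :=
  ⋂ (U : Set M) (_ : IsRelOpenNbhd A x U) (t : ℝ) (_ : 0 ≤ t),
    closure (flowImage φ U (Iic (-t)))

/-- The negative prolongational limit set `J⁻(x) = J⁻(x, M)`. -/
def jMinus (φ : Flow ℝ M) (x : M) : Set M := jMinusRel φ univ x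

/-- The omega limit set `ω(x) = ⋂_t closure (x · [t, ∞))`. -/
def omegaSet (φ : Flow ℝ M) (x : M) : Set M :=
  ⋂ t : ℝ, closure (flowImage φ {x} (Ici t))

/-- The alpha limit set `α(x) = ⋂_t closure (x · (-∞, t])`. -/
def alphaSet (φ : Flow ℝ M) (x : M) : Set M :=
  ⋂ t : ℝ, closure (flowImage φ {x} (Iic t))

/-- A set is invariant under the flow. -/
def FlowInvariant (φ : Flow ℝ M) (K : Set M) : Prop :=
  ∀ t : ℝ, ∀ x ∈ K, φ t x ∈ K

/-- The stable manifold `W^s(K) = {x : ∅ ≠ ω(x) ⊆ K}`; for an attractor this is its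
basin of attraction `𝒜(K)`. -/
def stableSet (φ : Flow ℝ M) (K : Set M) : Set M :=
  {x | (omegaSet φ x).Nonempty ∧ omegaSet φ x ⊆ K}

/-- The unstable manifold `W^u(K) = {x : ∅ ≠ α(x) ⊆ K}`. -/
def unstableSet (φ : Flow ℝ M) (K : Set M) : Set M :=
  {x | (alphaSet φ x).Nonempty ∧ alphaSet φ x ⊆ K}

/-- `K` is an isolated compact invariant set: it has a compact neighbourhood `N` in
which it is the maximal invariant set. -/
def IsIsolatedInvariant (φ : Flow ℝ M) (K : Set M) : Prop :=
  IsCompact K ∧ FlowInvariant φ K ∧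
    ∃ N : Set M, IsCompact N ∧ N ∈ nhdsSet K ∧ K = {x ∈ N | ∀ t : ℝ, φ t x ∈ N}

/-- `K` is an isolated attractor: an isolated compact invariant set whose stable
manifold is a neighbourhood of it. -/
def IsIsolatedAttractor (φ : Flow ℝ M) (K : Set M) : Prop :=
  IsIsolatedInvariant φ K ∧ stableSet φ K ∈ nhdsSet K

/-- The stabilization `K̂ = ⋃_{x ∈ K} J⁺(x)` of an attractor `K`, the smallest stable
attractor containing `K`. -/
def stabilization (φ : Flow ℝ M) (K : Set M) : Set M :=
  ⋃ x ∈ K, jPlus φ x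

/-- `K` has only internal explosions (no external explosions): every explosion point
of the basin of attraction lies in `K`. -/
def OnlyInternalExplosions (φ : Flow ℝ M) (K : Set M) : Prop :=
  ∀ x ∈ stableSet φ K \ K, jPlus φ x ⊆ K

section Helpers

open Filter Topology Metric

variable {X : Type} [MetricSpace X]

lemma flow_rev (φ : Flow ℝ X) (t : ℝ) (p : X) : φ (-t) (φ t p) = p := by
  rw [← φ.map_add, neg_add_cancel, φ.map_zero_apply]

lemma flow_flow (φ : Flow ℝ X) (a b : ℝ) (p : X) : φ a (φ b p) = φ (a + b) p :=
  (φ.map_add a b p).symm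

/-- Extraction of approximating sequences from membership in `J⁺(z)`. -/
lemma seq_of_jPlus {φ : Flow ℝ X} {z x : X} (h : x ∈ jPlus φ z) :
    ∃ (u : ℕ → X) (s : ℕ → ℝ), Tendsto u atTop (𝓝 z) ∧ (∀ n : ℕ, (n : ℝ) ≤ s n) ∧
      Tendsto (fun n => φ (s n) (u n)) atTop (𝓝 x) := by
  have key : ∀ n : ℕ, ∃ (u : X) (s : ℝ),
      dist u z < 1 / ((n : ℝ) + 1) ∧ (n : ℝ) ≤ s ∧ dist (φ s u) x < 1 / ((n : ℝ) + 1) := by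
    intro n
    have h1 : x ∈ closure (flowImage φ (ball z (1 / ((n : ℝ) + 1)) ∩ univ) (Ici (n : ℝ))) := by
      simp only [jPlus, jPlusRel, mem_iInter] at h
      exact h (ball z (1 / ((n : ℝ) + 1)) ∩ univ)
        ⟨⟨mem_ball_self (by positivity), mem_univ _⟩, _, isOpen_ball, rfl⟩ ((n : ℝ))
        (Nat.cast_nonneg n)
    rw [Metric.mem_closure_iff] at h1
    obtain ⟨w, hw, hdw⟩ := h1 _ (by positivity : (0 : ℝ) < 1 / ((n : ℝ) + 1))
    obtain ⟨u, ⟨hub, -⟩, s, hs, rfl⟩ := hw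
    exact ⟨u, s, mem_ball.mp hub, hs, by rwa [dist_comm] at hdw⟩
  choose u s h1 h2 h3 using key
  refine ⟨u, s, ?_, h2, ?_⟩
  · exact tendsto_iff_dist_tendsto_zero.mpr (squeeze_zero (fun n => dist_nonneg)
      (fun n => (h1 n).le) tendsto_one_div_add_atTop_nhds_zero_nat)
  · exact tendsto_iff_dist_tendsto_zero.mpr (squeeze_zero (fun n => dist_nonneg)
      (fun n => (h3 n).le) tendsto_one_div_add_atTop_nhds_zero_nat)

/-- Extraction of approximating sequences from membership in `J⁻(x)`. -/
lemma seq_of_jMinus {φ : Flow ℝ X} {x y : X} (h : y ∈ jMinus φ x) :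
    ∃ (u : ℕ → X) (s : ℕ → ℝ), Tendsto u atTop (𝓝 y) ∧ (∀ n : ℕ, (n : ℝ) ≤ s n) ∧
      Tendsto (fun n => φ (s n) (u n)) atTop (𝓝 x) := by
  have key : ∀ n : ℕ, ∃ (u : X) (s : ℝ),
      dist u y < 1 / ((n : ℝ) + 1) ∧ (n : ℝ) ≤ s ∧ dist (φ s u) x < 1 / ((n : ℝ) + 1) := by
    intro n
    have h1 : y ∈ closure (flowImage φ (ball x (1 / ((n : ℝ) + 1)) ∩ univ) (Iic (-(n : ℝ)))) := by
      simp only [jMinus, jMinusRel, mem_iInter] at h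
      exact h (ball x (1 / ((n : ℝ) + 1)) ∩ univ)
        ⟨⟨mem_ball_self (by positivity), mem_univ _⟩, _, isOpen_ball, rfl⟩ ((n : ℝ))
        (Nat.cast_nonneg n)
    rw [Metric.mem_closure_iff] at h1
    obtain ⟨w, hw, hdw⟩ := h1 _ (by positivity : (0 : ℝ) < 1 / ((n : ℝ) + 1))
    obtain ⟨v, ⟨hvb, -⟩, s, hs, rfl⟩ := hw
    refine ⟨φ s v, -s, by rwa [dist_comm] at hdw, by linarith [mem_Iic.mp hs], ?_⟩
    rw [flow_rev]
    exact mem_ball.mp hvb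
  choose u s h1 h2 h3 using key
  refine ⟨u, s, ?_, h2, ?_⟩
  · exact tendsto_iff_dist_tendsto_zero.mpr (squeeze_zero (fun n => dist_nonneg)
      (fun n => (h1 n).le) tendsto_one_div_add_atTop_nhds_zero_nat)
  · exact tendsto_iff_dist_tendsto_zero.mpr (squeeze_zero (fun n => dist_nonneg)
      (fun n => (h3 n).le) tendsto_one_div_add_atTop_nhds_zero_nat)

/-- Membership in `J⁺(b)` from sequences with frequently large times. -/
lemma mem_jPlus_of_freq (φ : Flow ℝ X) {b x : X} {u : ℕ → X} {r : ℕ → ℝ}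
    (hu : Tendsto u atTop (𝓝 b)) (hr : ∀ T : ℝ, ∃ᶠ n in atTop, T ≤ r n)
    (hx : Tendsto (fun n => φ (r n) (u n)) atTop (𝓝 x)) : x ∈ jPlus φ b := by
  simp only [jPlus, jPlusRel, mem_iInter]
  rintro U ⟨hbU, V, hV, rfl⟩ t ht
  rw [_root_.mem_closure_iff]
  intro W hW hxW
  have h1 : ∀ᶠ n in atTop, u n ∈ V := hu.eventually (hV.eventually_mem hbU.1)
  have h2 : ∀ᶠ n in atTop, φ (r n) (u n) ∈ W := hx.eventually (hW.eventually_mem hxW)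
  obtain ⟨n, ⟨hn1, hn2⟩, hn3⟩ := ((h1.and h2).and_frequently (hr t)).exists
  exact ⟨φ (r n) (u n), hn2, u n, ⟨hn1, mem_univ _⟩, r n, hn3, rfl⟩

/-- If `y ∈ J⁻(x)` then `x ∈ J⁺(y)`. -/
lemma mem_jPlus_of_mem_jMinus (φ : Flow ℝ X) {x y : X} (h : y ∈ jMinus φ x) :
    x ∈ jPlus φ y := by
  simp only [jPlus, jPlusRel, mem_iInter]
  rintro U ⟨hyU, V, hV, rfl⟩ t ht
  rw [_root_.mem_closure_iff]
  intro W hW hxW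
  have h1 : y ∈ closure (flowImage φ (W ∩ univ) (Iic (-t))) := by
    simp only [jMinus, jMinusRel, mem_iInter] at h
    exact h (W ∩ univ) ⟨⟨hxW, mem_univ _⟩, W, hW, rfl⟩ t ht
  rw [_root_.mem_closure_iff] at h1
  obtain ⟨v, hvV, hvmem⟩ := h1 V hV hyU.1
  obtain ⟨w, ⟨hwW, -⟩, s, hs, rfl⟩ := hvmem
  refine ⟨w, hwW, φ s w, ⟨hvV, mem_univ _⟩, -s, ?_, flow_rev φ s w⟩
  have := mem_Iic.mp hs
  exact mem_Ici.mpr (by linarith)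

lemma omegaSet_shift (φ : Flow ℝ X) (s : ℝ) (y : X) : omegaSet φ (φ s y) = omegaSet φ y := by
  have himg : ∀ t : ℝ, flowImage φ {φ s y} (Ici t) = flowImage φ {y} (Ici (t + s)) := by
    intro t
    ext w
    constructor
    · rintro ⟨u, hu, r, hr, rfl⟩
      rw [mem_singleton_iff] at hu
      subst hu
      refine ⟨y, rfl, r + s, ?_, φ.map_add r s y⟩
      have := mem_Ici.mp hr
      exact mem_Ici.mpr (by linarith)
    · rintro ⟨u, hu, r, hr, rfl⟩
      rw [mem_singleton_iff] at hu
      refine ⟨φ s y, rfl, r - s, ?_, ?_⟩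
      · have := mem_Ici.mp hr
        exact mem_Ici.mpr (by linarith)
      · rw [hu, flow_flow, sub_add_cancel]
  ext w
  simp only [omegaSet, mem_iInter]
  constructor
  · intro h t
    have h2 := h (t - s)
    rw [himg, sub_add_cancel] at h2
    exact h2
  · intro h t
    rw [himg]
    exact h (t + s)

lemma stableSet_shift (φ : Flow ℝ X) (K : Set X) {s : ℝ} {y : X}
    (h : φ s y ∈ stableSet φ K) : y ∈ stableSet φ K := by
  simp only [stableSet, mem_setOf_eq, omegaSet_shift] at h
  exact h

/-- First hitting time of a closed set along a flow line. -/
lemma exists_first_time {f : ℝ → X} (hf : Continuous f) {C : Set X} (hC : IsClosed C)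
    {s₀ : ℝ} (h0 : 0 ≤ s₀) (hs₀ : f s₀ ∈ C) :
    ∃ e, 0 ≤ e ∧ e ≤ s₀ ∧ f e ∈ C ∧ ∀ s, 0 ≤ s → s < e → f s ∉ C := by
  set A := Icc 0 s₀ ∩ f ⁻¹' C with hA
  have hAc : IsClosed A := isClosed_Icc.inter (hC.preimage hf)
  have hAne : A.Nonempty := ⟨s₀, ⟨h0, le_refl _⟩, hs₀⟩
  have hAb : BddBelow A := ⟨0, fun a ha => ha.1.1⟩
  have hmem := hAc.csInf_mem hAne hAb
  refine ⟨sInf A, hmem.1.1, hmem.1.2, hmem.2, fun s hs0 hse hsC => ?_⟩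
  exact absurd (csInf_le hAb ⟨⟨hs0, hse.le.trans hmem.1.2⟩, hsC⟩) (not_le.mpr hse)

lemma approach_from_below {f : ℝ → X} (hf : Continuous f) {e : ℝ} (he : 0 < e)
    {D : Set X} (hD : IsClosed D) (h : ∀ s, 0 ≤ s → s < e → f s ∈ D) : f e ∈ D := by
  have ht : Tendsto f (𝓝[<] e) (𝓝 (f e)) := (hf.tendsto e).mono_left nhdsWithin_le_nhds
  refine hD.mem_of_tendsto ht ?_
  filter_upwards [Ioo_mem_nhdsLT_of_mem (⟨he, le_refl e⟩ : e ∈ Ioc 0 e)] with s hs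
  exact h s hs.1.le hs.2

/-- Tube lemma for flows: orbit segments depend continuously on the initial point. -/
lemma flow_tube (φ : Flow ℝ X) {W : Set X} (hW : IsOpen W) {y : X} {C : ℝ}
    (h : ∀ s, 0 ≤ s → s ≤ C → φ s y ∈ W) :
    ∃ V, IsOpen V ∧ y ∈ V ∧ ∀ w ∈ V, ∀ s, 0 ≤ s → s ≤ C → φ s w ∈ W := by
  have hsub : Icc (0 : ℝ) C ×ˢ ({y} : Set X) ⊆ (Function.uncurry φ.toFun) ⁻¹' W := by
    rintro ⟨s, w⟩ hp
    simp only [mem_prod, mem_Icc, mem_singleton_iff] at hp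
    obtain ⟨⟨hs0, hsC⟩, rfl⟩ := hp
    exact h s hs0 hsC
  obtain ⟨u, v, hu, hv, hIu, hyv, huv⟩ :=
    generalized_tube_lemma isCompact_Icc isCompact_singleton (hW.preimage φ.cont') hsub
  refine ⟨v, hv, hyv rfl, fun w hw s hs0 hsC => ?_⟩
  have hp : ((s, w) : ℝ × X) ∈ u ×ˢ v := ⟨hIu ⟨hs0, hsC⟩, hw⟩
  exact huv hp

end Helpers

open Filter Topology Metric

/-- Let `φ` be a continuous flow on a locally compact metric space
`M` and `K` an isolated attractor with only internal explosions, i.e. `J⁺(x) ⊆ K` for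
every `x` in the basin of attraction `𝒜(K)` with `x ∉ K`.  Then `J⁻(x) ⊆ K` for every
`x ∈ K̂ ∖ K`, where `K̂` is the stabilization of `K`. -/
theorem jMinus_subset_of_onlyInternalExplosions {M : Type} [MetricSpace M]
    [LocallyCompactSpace M] (φ : Flow ℝ M) (K : Set M)
    (hK : IsIsolatedAttractor φ K) (hint : OnlyInternalExplosions φ K) :
    ∀ x ∈ stabilization φ K \ K, jMinus φ x ⊆ K := by
  obtain ⟨⟨KC, Kinv, -⟩, hA⟩ := hK
  intro x hx y hy
  by_contra hyK
  obtain ⟨hxhat, hxK⟩ := hx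
  rw [stabilization, mem_iUnion₂] at hxhat
  obtain ⟨z, hzK, hxz⟩ := hxhat
  -- Case 1: y is in the basin of attraction.
  by_cases hyA : y ∈ stableSet φ K
  · exact hxK (hint y ⟨hyA, hyK⟩ (mem_jPlus_of_mem_jMinus φ hy))
  -- Case 2: y is outside the basin of attraction.  Build nested compact
  -- neighbourhoods K ⊆ int N2 ⊆ N2 ⊆ int N1 ⊆ N1 ⊆ stableSet, avoiding x and y.
  have hKi : K ⊆ interior (stableSet φ K) := subset_interior_iff_mem_nhdsSet.mpr hA
  have hOopen : IsOpen (interior (stableSet φ K) ∩ ({x}ᶜ ∩ {y}ᶜ)) :=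
    isOpen_interior.inter (isOpen_compl_singleton.inter isOpen_compl_singleton)
  have hKO : K ⊆ interior (stableSet φ K) ∩ ({x}ᶜ ∩ {y}ᶜ) := by
    intro k hk
    refine ⟨hKi hk, ?_, ?_⟩
    · simp only [mem_compl_iff, mem_singleton_iff]
      rintro rfl; exact hxK hk
    · simp only [mem_compl_iff, mem_singleton_iff]
      rintro rfl; exact hyK hk
  obtain ⟨N1, N1c, hKN1, hN1O⟩ := exists_compact_between KC hOopen hKO
  obtain ⟨N2, N2c, hKN2, hN2⟩ := exists_compact_between KC isOpen_interior hKN1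
  have hN1A : N1 ⊆ stableSet φ K := fun p hp => interior_subset (hN1O hp).1
  have hN2A : N2 ⊆ stableSet φ K := fun p hp => hN1A (interior_subset (hN2 hp))
  have hxN1 : x ∉ N1 := fun hp => (hN1O hp).2.1 rfl
  have hyN1 : y ∉ N1 := fun hp => (hN1O hp).2.2 rfl
  ---------------------------------------------------------------
  -- PART 1: from x ∈ J⁺(z), z ∈ K, obtain d₀ ≥ 0 such that the backward
  -- orbit of x from time d₀ on lies in N2.
  ---------------------------------------------------------------
  obtain ⟨zs, ss, hz1, hs1, hz2⟩ := seq_of_jPlus hxz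
  have ev1 : ∀ᶠ m in atTop, zs m ∈ interior N2 :=
    hz1.eventually (isOpen_interior.eventually_mem (hKN2 hzK))
  have ev2 : ∀ᶠ m in atTop, φ (ss m) (zs m) ∉ N1 :=
    hz2.eventually (N1c.isClosed.isOpen_compl.eventually_mem hxN1)
  obtain ⟨m₀, hm₀⟩ := eventually_atTop.mp (ev1.and ev2)
  set Z : ℕ → M := fun m => zs (m + m₀) with hZdef
  set S : ℕ → ℝ := fun m => ss (m + m₀) with hSdef
  have hZ1 : Tendsto Z atTop (𝓝 z) := hz1.comp (tendsto_add_atTop_nat m₀)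
  have hZ2 : Tendsto (fun m => φ (S m) (Z m)) atTop (𝓝 x) := hz2.comp (tendsto_add_atTop_nat m₀)
  have hS1 : ∀ m : ℕ, (m : ℝ) ≤ S m :=
    fun m => le_trans (Nat.cast_le.mpr (Nat.le_add_right m m₀)) (hs1 (m + m₀))
  have hS0 : ∀ m : ℕ, (0 : ℝ) ≤ S m := fun m => le_trans (Nat.cast_nonneg m) (hS1 m)
  have hZint : ∀ m, Z m ∈ interior N2 := fun m => (hm₀ (m + m₀) (Nat.le_add_left _ _)).1
  have hZout : ∀ m, φ (S m) (Z m) ∉ N1 := fun m => (hm₀ (m + m₀) (Nat.le_add_left _ _)).2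
  have hfc : ∀ p : M, Continuous fun s : ℝ => φ s p :=
    fun p => φ.continuous continuous_id continuous_const
  have hfc' : ∀ c : ℝ, Continuous fun p : M => φ c p :=
    fun c => φ.continuous continuous_const continuous_id
  -- first exit time from interior N2
  have exg : ∀ m, ∃ g, 0 ≤ g ∧ g ≤ S m ∧ φ g (Z m) ∉ interior N2 ∧
      ∀ s, 0 ≤ s → s < g → φ s (Z m) ∈ interior N2 := by
    intro m
    have hSmem : φ (S m) (Z m) ∈ (interior N2)ᶜ := by
      intro hc
      exact hZout m (interior_subset (hN2 (interior_subset hc)))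
    obtain ⟨g, h1, h2, h3, h4⟩ := exists_first_time (hfc (Z m))
      isOpen_interior.isClosed_compl (hS0 m) hSmem
    exact ⟨g, h1, h2, h3, fun s a b => not_not.mp (h4 s a b)⟩
  choose g hg0 hgS hgout hgin using exg
  have hgpos : ∀ m, 0 < g m := by
    intro m
    rcases (hg0 m).eq_or_lt with h | h
    · exfalso
      apply hgout m
      rw [← h, φ.map_zero_apply]
      exact hZint m
    · exact h
  have hhm : ∀ m, φ (g m) (Z m) ∈ N2 := fun m =>
    approach_from_below (hfc (Z m)) (hgpos m) N2c.isClosed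
      (fun s a b => interior_subset (hgin m s a b))
  -- exit times tend to infinity
  have hg_top : Tendsto g atTop atTop := by
    rw [Filter.tendsto_atTop]
    intro C
    obtain ⟨V, hVo, hzV, hV⟩ := flow_tube φ isOpen_interior
      (fun s _ _ => hKN2 (Kinv s z hzK) : ∀ s, 0 ≤ s → s ≤ C → φ s z ∈ interior N2)
    filter_upwards [hZ1.eventually (hVo.eventually_mem hzV)] with m hm
    by_contra hc
    push_neg at hc
    exact hgout m (hV (Z m) hm (g m) (hg0 m) hc.le)
  obtain ⟨h₀, hh₀N2, σ, hσ, hσlim⟩ := N2c.tendsto_subseq hhm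
  have hh₀int : h₀ ∉ interior N2 :=
    isOpen_interior.isClosed_compl.mem_of_tendsto hσlim
      (Eventually.of_forall fun k => hgout (σ k))
  have hh₀K : h₀ ∉ K := fun h => hh₀int (hKN2 h)
  have hflow_eq : ∀ m, φ (S m - g m) (φ (g m) (Z m)) = φ (S m) (Z m) := by
    intro m
    rw [flow_flow, sub_add_cancel]
  obtain ⟨d₀, hd₀0, hd⟩ :
      ∃ d₀ : ℝ, 0 ≤ d₀ ∧ ∀ s : ℝ, d₀ ≤ s → φ (-s) x ∈ N2 := by
    by_cases Hd : ∀ T : ℝ, ∃ᶠ k in atTop, T ≤ S (σ k) - g (σ k)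
    · exfalso
      have hxh : x ∈ jPlus φ h₀ := by
        refine mem_jPlus_of_freq φ hσlim Hd ?_
        have heq : (fun k => φ (S (σ k) - g (σ k)) (((fun m => φ (g m) (Z m)) ∘ σ) k)) =
            fun k => φ (S (σ k)) (Z (σ k)) := by
          funext k
          exact hflow_eq (σ k)
        rw [heq]
        exact hZ2.comp hσ.tendsto_atTop
      exact hxK (hint h₀ ⟨hN2A hh₀N2, hh₀K⟩ hxh)
    · push_neg at Hd
      obtain ⟨T₀, hT₀⟩ := Hd
      obtain ⟨k₀, hk₀⟩ := eventually_atTop.mp hT₀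
      have hmemIcc : ∀ k, S (σ (k + k₀)) - g (σ (k + k₀)) ∈ Icc (0 : ℝ) T₀ := by
        intro k
        refine ⟨sub_nonneg.mpr (hgS _), ?_⟩
        have := hk₀ (k + k₀) (Nat.le_add_left _ _)
        exact this.le
      obtain ⟨d₀, hd₀mem, σ₂, hσ₂, hWlim⟩ := isCompact_Icc.tendsto_subseq hmemIcc
      set ρ : ℕ → ℕ := fun k => σ (σ₂ k + k₀) with hρdef
      have hρtop : Tendsto ρ atTop atTop :=
        hσ.tendsto_atTop.comp ((tendsto_add_atTop_nat k₀).comp hσ₂.tendsto_atTop)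
      have hhlim : Tendsto (fun k => φ (g (ρ k)) (Z (ρ k))) atTop (𝓝 h₀) :=
        hσlim.comp ((tendsto_add_atTop_nat k₀).comp hσ₂.tendsto_atTop)
      have hWlim' : Tendsto (fun k => S (ρ k) - g (ρ k)) atTop (𝓝 d₀) := hWlim
      have hjoint : Tendsto (fun k => φ (S (ρ k) - g (ρ k)) (φ (g (ρ k)) (Z (ρ k)))) atTop
          (𝓝 (φ d₀ h₀)) :=
        (φ.cont'.tendsto (d₀, h₀)).comp (hWlim'.prodMk_nhds hhlim)
      have hxlim : Tendsto (fun k => φ (S (ρ k) - g (ρ k)) (φ (g (ρ k)) (Z (ρ k)))) atTop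
          (𝓝 x) := by
        have heq : (fun k => φ (S (ρ k) - g (ρ k)) (φ (g (ρ k)) (Z (ρ k)))) =
            fun k => φ (S (ρ k)) (Z (ρ k)) := by
          funext k
          exact hflow_eq (ρ k)
        rw [heq]
        exact hZ2.comp hρtop
      have hxeq : x = φ d₀ h₀ := tendsto_nhds_unique hxlim hjoint
      -- backward orbit of h₀ stays in N2
      have hback : ∀ s : ℝ, 0 ≤ s → φ (-s) h₀ ∈ N2 := by
        intro s hs
        have hlim2 : Tendsto (fun k => φ (-s) (((fun m => φ (g m) (Z m)) ∘ σ) k)) atTop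
            (𝓝 (φ (-s) h₀)) := ((hfc' (-s)).tendsto h₀).comp hσlim
        refine N2c.isClosed.mem_of_tendsto hlim2 ?_
        have hev : ∀ᶠ k in atTop, s ≤ g (σ k) :=
          (hg_top.comp hσ.tendsto_atTop).eventually (eventually_ge_atTop s)
        filter_upwards [hev] with k hk
        simp only [Function.comp_apply]
        rw [flow_flow]
        rcases hs.eq_or_lt with h | h
        · rw [← h]
          simpa using hhm (σ k)
        · exact interior_subset (hgin (σ k) _ (by linarith) (by linarith))
      refine ⟨d₀, hd₀mem.1, fun s hs => ?_⟩
      rw [hxeq, flow_flow]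
      have e1 : -s + d₀ = -(s - d₀) := by ring
      rw [e1]
      exact hback _ (by linarith)
  ---------------------------------------------------------------
  -- PART 2: the sequences from y ∈ J⁻(x) must enter N1 for the first time
  -- at times tending to infinity, giving a contradiction.
  ---------------------------------------------------------------
  have horb : ∀ s : ℝ, φ s y ∉ N1 := fun s hs => hyA (stableSet_shift φ K (hN1A hs))
  obtain ⟨ys, ts, hy1, hts, hy2⟩ := seq_of_jMinus hy
  have evA : ∀ᶠ n in atTop, (d₀ + 1 : ℝ) ≤ ts n := by
    have : Tendsto ts atTop atTop := tendsto_atTop_mono hts tendsto_natCast_atTop_atTop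
    exact this.eventually (eventually_ge_atTop _)
  have evB : ∀ᶠ n in atTop, φ (ts n - (d₀ + 1)) (ys n) ∈ interior N1 := by
    have hlim : Tendsto (fun n => φ (-(d₀ + 1)) (φ (ts n) (ys n))) atTop
        (𝓝 (φ (-(d₀ + 1)) x)) := ((hfc' (-(d₀ + 1))).tendsto x).comp hy2
    have hmemx : φ (-(d₀ + 1)) x ∈ interior N1 := hN2 (hd (d₀ + 1) (by linarith))
    filter_upwards [hlim.eventually (isOpen_interior.eventually_mem hmemx)] with n hn
    have e1 : -(d₀ + 1) + ts n = ts n - (d₀ + 1) := by ring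
    rwa [flow_flow, e1] at hn
  have evC : ∀ᶠ n in atTop, ys n ∉ N1 :=
    hy1.eventually (N1c.isClosed.isOpen_compl.eventually_mem hyN1)
  obtain ⟨n₀, hn₀⟩ := eventually_atTop.mp ((evA.and evB).and evC)
  set Y : ℕ → M := fun n => ys (n + n₀) with hYdef
  set Tn : ℕ → ℝ := fun n => ts (n + n₀) with hTdef
  have hY1 : Tendsto Y atTop (𝓝 y) := hy1.comp (tendsto_add_atTop_nat n₀)
  have hY2 : Tendsto (fun n => φ (Tn n) (Y n)) atTop (𝓝 x) := hy2.comp (tendsto_add_atTop_nat n₀)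
  have pA : ∀ n, (d₀ + 1 : ℝ) ≤ Tn n := fun n => (hn₀ (n + n₀) (Nat.le_add_left _ _)).1.1
  have pB : ∀ n, φ (Tn n - (d₀ + 1)) (Y n) ∈ interior N1 :=
    fun n => (hn₀ (n + n₀) (Nat.le_add_left _ _)).1.2
  have pC : ∀ n, Y n ∉ N1 := fun n => (hn₀ (n + n₀) (Nat.le_add_left _ _)).2
  -- first entrance time into N1
  have exe : ∀ n, ∃ e, 0 ≤ e ∧ e ≤ Tn n - (d₀ + 1) ∧ φ e (Y n) ∈ N1 ∧
      ∀ s, 0 ≤ s → s < e → φ s (Y n) ∉ N1 := by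
    intro n
    exact exists_first_time (hfc (Y n)) N1c.isClosed
      (by linarith [pA n, hd₀0]) (interior_subset (pB n))
  choose e he0 heT hein heout using exe
  have hepos : ∀ n, 0 < e n := by
    intro n
    rcases (he0 n).eq_or_lt with h | h
    · exfalso
      apply pC n
      have := hein n
      rwa [← h, φ.map_zero_apply] at this
    · exact h
  have hbnd : ∀ n, φ (e n) (Y n) ∉ interior N1 := fun n =>
    approach_from_below (hfc (Y n)) (hepos n) isOpen_interior.isClosed_compl
      (fun s a b => fun hm => heout n s a b (interior_subset hm))
  have he_top : Tendsto e atTop atTop := by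
    rw [Filter.tendsto_atTop]
    intro C
    obtain ⟨V, hVo, hyV, hV⟩ := flow_tube φ N1c.isClosed.isOpen_compl
      (fun s _ _ => horb s : ∀ s, 0 ≤ s → s ≤ C → φ s y ∈ N1ᶜ)
    filter_upwards [hY1.eventually (hVo.eventually_mem hyV)] with n hn
    by_contra hc
    push_neg at hc
    exact hV (Y n) hn (e n) (he0 n) hc.le (hein n)
  obtain ⟨b₀, hb₀N1, τ, hτ, hblim⟩ := N1c.tendsto_subseq hein
  have hb₀int : b₀ ∉ interior N1 :=
    isOpen_interior.isClosed_compl.mem_of_tendsto hblim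
      (Eventually.of_forall fun k => hbnd (τ k))
  have hb₀K : b₀ ∉ K := fun h => hb₀int (hN2 (hKN2.trans interior_subset h))
  have hflow_eq2 : ∀ n, φ (Tn n - e n) (φ (e n) (Y n)) = φ (Tn n) (Y n) := by
    intro n
    rw [flow_flow, sub_add_cancel]
  have hRlb : ∀ n, d₀ + 1 ≤ Tn n - e n := fun n => by linarith [heT n]
  by_cases HR : ∀ T : ℝ, ∃ᶠ k in atTop, T ≤ Tn (τ k) - e (τ k)
  · -- x ∈ J⁺(b₀) ⊆ K, contradiction
    have hxb : x ∈ jPlus φ b₀ := by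
      refine mem_jPlus_of_freq φ hblim HR ?_
      have heq : (fun k => φ (Tn (τ k) - e (τ k)) (((fun n => φ (e n) (Y n)) ∘ τ) k)) =
          fun k => φ (Tn (τ k)) (Y (τ k)) := by
        funext k
        exact hflow_eq2 (τ k)
      rw [heq]
      exact hY2.comp hτ.tendsto_atTop
    exact hxK (hint b₀ ⟨hN1A hb₀N1, hb₀K⟩ hxb)
  · push_neg at HR
    obtain ⟨T₁, hT₁⟩ := HR
    obtain ⟨k₁, hk₁⟩ := eventually_atTop.mp hT₁
    have hmemIcc : ∀ k, Tn (τ (k + k₁)) - e (τ (k + k₁)) ∈ Icc (0 : ℝ) T₁ := by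
      intro k
      refine ⟨by linarith [hRlb (τ (k + k₁)), hd₀0], ?_⟩
      have := hk₁ (k + k₁) (Nat.le_add_left _ _)
      exact this.le
    obtain ⟨r₀, hr₀mem, τ₂, hτ₂, hRlim⟩ := isCompact_Icc.tendsto_subseq hmemIcc
    set ρ' : ℕ → ℕ := fun k => τ (τ₂ k + k₁) with hρ'def
    have hρ'top : Tendsto ρ' atTop atTop :=
      hτ.tendsto_atTop.comp ((tendsto_add_atTop_nat k₁).comp hτ₂.tendsto_atTop)
    have hblim' : Tendsto (fun k => φ (e (ρ' k)) (Y (ρ' k))) atTop (𝓝 b₀) :=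
      hblim.comp ((tendsto_add_atTop_nat k₁).comp hτ₂.tendsto_atTop)
    have hRlim' : Tendsto (fun k => Tn (ρ' k) - e (ρ' k)) atTop (𝓝 r₀) := hRlim
    have hr₀lb : d₀ + 1 ≤ r₀ := ge_of_tendsto' hRlim' fun k => hRlb (ρ' k)
    have hjoint : Tendsto (fun k => φ (Tn (ρ' k) - e (ρ' k)) (φ (e (ρ' k)) (Y (ρ' k)))) atTop
        (𝓝 (φ r₀ b₀)) := (φ.cont'.tendsto (r₀, b₀)).comp (hRlim'.prodMk_nhds hblim')
    have hxlim : Tendsto (fun k => φ (Tn (ρ' k) - e (ρ' k)) (φ (e (ρ' k)) (Y (ρ' k)))) atTop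
        (𝓝 x) := by
      have heq : (fun k => φ (Tn (ρ' k) - e (ρ' k)) (φ (e (ρ' k)) (Y (ρ' k)))) =
          fun k => φ (Tn (ρ' k)) (Y (ρ' k)) := by
        funext k
        exact hflow_eq2 (ρ' k)
      rw [heq]
      exact hY2.comp hρ'top
    have hxeq2 : x = φ r₀ b₀ := tendsto_nhds_unique hxlim hjoint
    -- the point φ (-1) b₀ lies in N2 ⊆ interior N1 ...
    have h1 : φ (-1 : ℝ) b₀ ∈ N2 := by
      have e1 : φ (-(1 + r₀)) x = φ (-1 : ℝ) b₀ := by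
        rw [hxeq2, flow_flow]
        congr 1
        ring
      rw [← e1]
      exact hd (1 + r₀) (by linarith)
    -- ... but it is also a limit of points outside N1, contradiction.
    have h2 : φ (-1 : ℝ) b₀ ∉ interior N1 := by
      have hlim2 : Tendsto (fun k => φ (-1 : ℝ) (φ (e (ρ' k)) (Y (ρ' k)))) atTop
          (𝓝 (φ (-1 : ℝ) b₀)) := ((hfc' (-1 : ℝ)).tendsto b₀).comp hblim'
      refine isOpen_interior.isClosed_compl.mem_of_tendsto hlim2 ?_
      have hev : ∀ᶠ k in atTop, (1 : ℝ) ≤ e (ρ' k) :=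
        (he_top.comp hρ'top).eventually (eventually_ge_atTop 1)
      filter_upwards [hev] with k hk
      rw [flow_flow]
      intro hmem
      exact heout (ρ' k) _ (by linarith) (by linarith) (interior_subset hmem)
    exact h2 (hN2 h1)
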